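/- Let f, n, m be natural numbers with n > 3f and m ≥ n − f. Let P be a multiset of real numbers with card P = n and let U be a sub-multiset of P with card U = m. Then for every x ∈ U, the range of the trimmed multiset trim_f^x(P) is contained in the range of the correct positions: min U ≤ min(x, P_(f+1)) and max(x, P_(n−f)) ≤ max U, i.e. [min(x, P_(f+1)), max(x, P_(n−f))] ⊆ [min U, max U]. -/

import Mathlib

/-- The k-th smallest element (1-indexed, counted with multiplicity) of a
multiset of real numbers. -/
noncomputable def nth (S : Multiset ℝ) (k : ℕ) : ℝ :=
  (S.sort (· ≤ ·)).getD (k - 1) 0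

/-- The smallest element of a (nonempty) multiset of reals. -/
noncomputable def mmin (S : Multiset ℝ) : ℝ := nth S 1

/-- The largest element of a (nonempty) multiset of reals. -/
noncomputable def mmax (S : Multiset ℝ) : ℝ := nth S S.card

/-- The diameter of a (nonempty) multiset of reals. -/
noncomputable def mdiam (S : Multiset ℝ) : ℝ := mmax S - mmin S

open Classical

lemma mmin_le {S : Multiset ℝ} {x : ℝ} (hx : x ∈ S) : mmin S ≤ x := by
  set l := S.sort (· ≤ ·) with hl
  have hs : l.Pairwise (· ≤ ·) := S.pairwise_sort _
  have hxl : x ∈ l := (Multiset.mem_sort _).mpr hx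
  obtain ⟨i, hi, rfl⟩ := List.mem_iff_getElem.mp hxl
  have h0 : 0 < l.length := by omega
  have : mmin S = l[0] := by
    simp [mmin, nth, ← hl, List.getD_eq_getElem?_getD, List.getElem?_eq_getElem h0]
  rw [this]
  exact List.Pairwise.rel_get_of_le hs (by simp)

lemma le_mmax {S : Multiset ℝ} {x : ℝ} (hx : x ∈ S) : x ≤ mmax S := by
  set l := S.sort (· ≤ ·) with hl
  have hs : l.Pairwise (· ≤ ·) := S.pairwise_sort _
  have hxl : x ∈ l := (Multiset.mem_sort _).mpr hx
  obtain ⟨i, hi, rfl⟩ := List.mem_iff_getElem.mp hxl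
  have hlen : l.length = S.card := S.length_sort _
  have h0 : S.card - 1 < l.length := by omega
  have : mmax S = l[S.card - 1] := by
    simp [mmax, nth, ← hl, List.getD_eq_getElem?_getD, List.getElem?_eq_getElem h0]
  rw [this]
  exact List.Pairwise.rel_get_of_le hs (by simp; omega)

lemma filter_lt_card (S : Multiset ℝ) (k : ℕ) (hk : k < S.card) (c : ℝ)
    (h : nth S (k + 1) < c) : k + 1 ≤ (S.filter (· < c)).card := by
  set l := S.sort (· ≤ ·) with hl
  have hs : l.Pairwise (· ≤ ·) := S.pairwise_sort _
  have hlen : l.length = S.card := S.length_sort _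
  have hk' : k < l.length := by omega
  have hkv : nth S (k + 1) = l[k] := by
    simp [nth, ← hl, List.getD_eq_getElem?_getD, List.getElem?_eq_getElem hk']
  have hall : ∀ a ∈ l.take (k + 1), a < c := by
    intro a ha
    obtain ⟨i, hi, rfl⟩ := List.mem_iff_getElem.mp ha
    rw [List.getElem_take]
    have hik : i ≤ k := by
      have := hi; simp [List.length_take] at this; omega
    calc l[i]'(by omega) ≤ l[k] := hs.rel_get_of_le (by simpa using hik)
      _ < c := by rw [← hkv]; exact h
  have hS : (S.filter (· < c)) = ((l.filter (fun a => decide (a < c)) : List ℝ) : Multiset ℝ) := by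
    conv_lhs => rw [← S.sort_eq (· ≤ ·)]
    rw [Multiset.filter_coe]
  rw [hS, Multiset.coe_card]
  have : l = l.take (k+1) ++ l.drop (k+1) := (List.take_append_drop _ _).symm
  rw [this, List.filter_append, List.length_append]
  have h1 : (l.take (k+1)).filter (fun a => decide (a < c)) = l.take (k+1) :=
    List.filter_eq_self.mpr (fun a ha => by simpa using hall a ha)
  rw [h1, List.length_take]
  omega

lemma filter_gt_card (S : Multiset ℝ) (k : ℕ) (hk : k < S.card) (c : ℝ)
    (h : c < nth S (S.card - k)) : k + 1 ≤ (S.filter (c < ·)).card := by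
  set l := S.sort (· ≤ ·) with hl
  have hs : l.Pairwise (· ≤ ·) := S.pairwise_sort _
  have hlen : l.length = S.card := S.length_sort _
  have hk' : S.card - k - 1 < l.length := by omega
  have hkv : nth S (S.card - k) = l[S.card - k - 1] := by
    simp [nth, ← hl, List.getD_eq_getElem?_getD, List.getElem?_eq_getElem hk']
  have hall : ∀ a ∈ l.drop (S.card - k - 1), c < a := by
    intro a ha
    obtain ⟨i, hi, rfl⟩ := List.mem_iff_getElem.mp ha
    rw [List.getElem_drop]
    calc c < l[S.card - k - 1] := by rw [← hkv]; exact h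
      _ ≤ l[S.card - k - 1 + i]'(by simp [List.length_drop] at hi; omega) :=
        hs.rel_get_of_le (by simp)
  have hS : (S.filter (c < ·)) = ((l.filter (fun a => decide (c < a)) : List ℝ) : Multiset ℝ) := by
    conv_lhs => rw [← S.sort_eq (· ≤ ·)]
    rw [Multiset.filter_coe]
  rw [hS, Multiset.coe_card]
  have : l = l.take (S.card - k - 1) ++ l.drop (S.card - k - 1) := (List.take_append_drop _ _).symm
  rw [this, List.filter_append, List.length_append]
  have h1 : (l.drop (S.card - k - 1)).filter (fun a => decide (c < a)) = l.drop (S.card - k - 1) :=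
    List.filter_eq_self.mpr (fun a ha => by simpa using hall a ha)
  rw [h1, List.length_drop]
  omega

theorem stmt2 (f n m : ℕ) (P U : Multiset ℝ)
    (hn : n > 3 * f) (hm : m ≥ n - f)
    (hP : Multiset.card P = n) (hU : U ≤ P) (hUm : Multiset.card U = m) :
    ∀ x ∈ U,
      mmin U ≤ min x (nth P (f + 1)) ∧ max x (nth P (n - f)) ≤ mmax U := by
  intro x hx
  have hxP : x ∈ P := Multiset.mem_of_le hU hx
  have hmpos : 0 < m := by
    have : Multiset.card U ≤ Multiset.card P := Multiset.card_le_card hU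
    omega
  have hcard_sub : Multiset.card (P - U) = n - m := by
    rw [Multiset.card_sub hU, hP, hUm]
  have hnm : n - m ≤ f := by
    have : Multiset.card U ≤ Multiset.card P := Multiset.card_le_card hU
    omega
  constructor
  · refine le_min (mmin_le hx) ?_
    by_contra hlt
    push_neg at hlt
    have h1 := filter_lt_card P f (by omega) (mmin U) hlt
    have h2 : (U.filter (· < mmin U)) = 0 :=
      Multiset.filter_eq_nil.mpr fun a ha => not_lt.mpr (mmin_le ha)
    have h3 : P.filter (· < mmin U)
        = (P - U).filter (· < mmin U) + U.filter (· < mmin U) := by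
      rw [← Multiset.filter_add, tsub_add_cancel_of_le hU]
    have h4 : Multiset.card ((P - U).filter (· < mmin U)) ≤ n - m := by
      rw [← hcard_sub]; exact Multiset.card_le_card (Multiset.filter_le _ _)
    rw [h3, Multiset.card_add, h2, Multiset.card_zero] at h1
    omega
  · refine max_le (le_mmax hx) ?_
    by_contra hlt
    push_neg at hlt
    have h1 := filter_gt_card P f (by omega) (mmax U) (by rw [hP]; exact hlt)
    have h2 : (U.filter (mmax U < ·)) = 0 :=
      Multiset.filter_eq_nil.mpr fun a ha => not_lt.mpr (le_mmax ha)
    have h3 : P.filter (mmax U < ·)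
        = (P - U).filter (mmax U < ·) + U.filter (mmax U < ·) := by
      rw [← Multiset.filter_add, tsub_add_cancel_of_le hU]
    have h4 : Multiset.card ((P - U).filter (mmax U < ·)) ≤ n - m := by
      rw [← hcard_sub]; exact Multiset.card_le_card (Multiset.filter_le _ _)
    rw [h3, Multiset.card_add, h2, Multiset.card_zero] at h1
    omega
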